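/- Let φ : (0,∞) → [0,∞) be integrable and monotone decreasing, and suppose that for some β ∈ [0,1] one has limsup_{u→0⁺} φ(u)·u^β < ∞. Then there exists a constant c < ∞, independent of x, such that for all x > 0, |∫₀^∞ cos(ux) φ(u) du| ≤ c·x^{β−1} and |∫₀^∞ sin(ux) φ(u) du| ≤ c·x^{β−1}. -/

import Mathlib

open MeasureTheory Real Set Filter Topology

private lemma shift_setIntegral (f : ℝ → ℝ) (T : ℝ) (s : Set ℝ) :
    ∫ u in (fun x => x + T) ⁻¹' s, f (u + T) = ∫ u in s, f u :=
  (measurePreserving_add_right volume T).setIntegral_preimage_emb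
    (MeasurableEquiv.addRight T).measurableEmbedding f s

private lemma shift_integrableOn {f : ℝ → ℝ} {s : Set ℝ} (hf : IntegrableOn f s) (T : ℝ) :
    IntegrableOn (fun u => f (u + T)) ((fun x => x + T) ⁻¹' s) :=
  ((measurePreserving_add_right volume T).integrableOn_comp_preimage
    (MeasurableEquiv.addRight T).measurableEmbedding).2 hf

private lemma abs_int_le {μ : Measure ℝ} (f : ℝ → ℝ) :
    |∫ x, f x ∂μ| ≤ ∫ x, |f x| ∂μ := by
  simpa [Real.norm_eq_abs] using norm_integral_le_integral_norm (μ := μ) f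

private lemma osc_bound (φ : ℝ → ℝ)
    (hpos : ∀ u ∈ Ioi (0:ℝ), 0 ≤ φ u)
    (hint : IntegrableOn φ (Ioi 0))
    (hanti : AntitoneOn φ (Ioi 0))
    {T : ℝ} (hT : 0 < T)
    (k : ℝ → ℝ) (hk : Measurable k) (hk1 : ∀ u, |k u| ≤ 1)
    (hkT : ∀ u, k (u + T) = - k u) :
    |∫ u in Ioi (0:ℝ), k u * φ u| ≤ ∫ u in Ioc (0:ℝ) T, φ u := by
  have pre0 : (fun x => x + T) ⁻¹' Ioi (0:ℝ) = Ioi (-T) := by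
    rw [preimage_add_const_Ioi, zero_sub]
  have preT : (fun x => x + T) ⁻¹' Ioi T = Ioi (0:ℝ) := by
    rw [preimage_add_const_Ioi, sub_self]
  have preIoc : (fun x => x + T) ⁻¹' Ioc (0:ℝ) T = Ioc (-T) 0 := by
    rw [preimage_add_const_Ioc, zero_sub, sub_self]
  -- integrability facts
  have hφT : IntegrableOn (fun u => φ (u + T)) (Ioi (-T)) := by
    have := shift_integrableOn hint T; rwa [pre0] at this
  have hφT0 : IntegrableOn (fun u => φ (u + T)) (Ioi 0) :=
    hφT.mono_set (Ioi_subset_Ioi (by linarith))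
  have hφTm : IntegrableOn (fun u => φ (u + T)) (Ioc (-T) 0) :=
    hφT.mono_set Ioc_subset_Ioi_self
  have hbdd : ∃ C, ∀ u, ‖k u‖ ≤ C := ⟨1, fun u => hk1 u⟩
  have hmul : ∀ {s : Set ℝ} {g : ℝ → ℝ}, IntegrableOn g s →
      IntegrableOn (fun u => k u * g u) s := fun hg =>
    hg.bdd_mul (c := 1) (hk.aestronglyMeasurable.restrict) (Eventually.of_forall fun u => hk1 u)
  have hJ : Integrable (fun u => k u * φ u) (volume.restrict (Ioi (0:ℝ))) := hmul hint
  have hB : Integrable (fun u => k u * φ (u + T)) (volume.restrict (Ioi (0:ℝ))) := hmul hφT0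
  have hA : Integrable (fun u => k u * φ (u + T)) (volume.restrict (Ioc (-T) (0:ℝ))) := hmul hφTm
  set J := ∫ u in Ioi (0:ℝ), k u * φ u with hJdef
  set A := ∫ u in Ioc (-T) (0:ℝ), k u * φ (u + T) with hAdef
  set B := ∫ u in Ioi (0:ℝ), k u * φ (u + T) with hBdef
  -- key reflection identity
  have key : J = -(A + B) := by
    have h1 : ∫ u in Ioi (-T), k (u + T) * φ (u + T) = J := by
      have := shift_setIntegral (fun u => k u * φ u) T (Ioi 0)
      rwa [pre0] at this
    have h2 : ∫ u in Ioi (-T), k (u + T) * φ (u + T)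
        = - ∫ u in Ioi (-T), k u * φ (u + T) := by
      rw [← integral_neg]
      refine setIntegral_congr_fun measurableSet_Ioi fun u _ => ?_
      rw [hkT u]; ring
    have h3 : ∫ u in Ioi (-T), k u * φ (u + T) = A + B := by
      rw [← setIntegral_union (Ioc_disjoint_Ioi le_rfl) measurableSet_Ioi hA hB,
        Ioc_union_Ioi_eq_Ioi (by linarith : -T ≤ (0:ℝ))]
    rw [← h1, h2, h3]
  -- difference integral
  have hdiff : J - B = ∫ u in Ioi (0:ℝ), k u * (φ u - φ (u + T)) := by
    rw [hJdef, hBdef, ← integral_sub hJ hB]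
    refine setIntegral_congr_fun measurableSet_Ioi fun u _ => ?_
    ring
  have hDnn : ∀ u ∈ Ioi (0:ℝ), 0 ≤ φ u - φ (u + T) := fun u hu =>
    sub_nonneg.2 (hanti hu (by simp only [mem_Ioi] at hu ⊢; linarith) (by linarith))
  have hDint : IntegrableOn (fun u => φ u - φ (u + T)) (Ioi 0) := hint.sub hφT0
  have hdiff_le : |J - B| ≤ ∫ u in Ioi (0:ℝ), (φ u - φ (u + T)) := by
    rw [hdiff]
    calc |∫ u in Ioi (0:ℝ), k u * (φ u - φ (u + T))|
        ≤ ∫ u in Ioi (0:ℝ), |k u * (φ u - φ (u + T))| :=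
          abs_int_le _
      _ ≤ ∫ u in Ioi (0:ℝ), (φ u - φ (u + T)) := by
          refine setIntegral_mono_on (hmul hDint).abs hDint measurableSet_Ioi fun u hu => ?_
          rw [abs_mul]
          calc |k u| * |φ u - φ (u + T)| ≤ 1 * |φ u - φ (u + T)| :=
                mul_le_mul_of_nonneg_right (hk1 u) (abs_nonneg _)
            _ = φ u - φ (u + T) := by rw [one_mul, abs_of_nonneg (hDnn u hu)]
  -- compute the difference integral
  have hshiftT : ∫ u in Ioi (0:ℝ), φ (u + T) = ∫ u in Ioi T, φ u := by
    have := shift_setIntegral φ T (Ioi T); rwa [preT] at this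
  have hsplit0 : ∫ u in Ioi (0:ℝ), φ u = (∫ u in Ioc (0:ℝ) T, φ u) + ∫ u in Ioi T, φ u := by
    rw [← setIntegral_union (Ioc_disjoint_Ioi le_rfl) measurableSet_Ioi
      (hint.mono_set Ioc_subset_Ioi_self) (hint.mono_set (Ioi_subset_Ioi hT.le)),
      Ioc_union_Ioi_eq_Ioi hT.le]
  have hDval : ∫ u in Ioi (0:ℝ), (φ u - φ (u + T)) = ∫ u in Ioc (0:ℝ) T, φ u := by
    rw [integral_sub hint hφT0, hshiftT, hsplit0]; ring
  -- bound on A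
  have hAshift : ∫ u in Ioc (-T) (0:ℝ), φ (u + T) = ∫ u in Ioc (0:ℝ) T, φ u := by
    have := shift_setIntegral φ T (Ioc 0 T); rwa [preIoc] at this
  have hA_le : |A| ≤ ∫ u in Ioc (0:ℝ) T, φ u := by
    rw [← hAshift, hAdef]
    calc |∫ u in Ioc (-T) (0:ℝ), k u * φ (u + T)|
        ≤ ∫ u in Ioc (-T) (0:ℝ), |k u * φ (u + T)| := abs_int_le _
      _ ≤ ∫ u in Ioc (-T) (0:ℝ), φ (u + T) := by
          refine setIntegral_mono_on hA.abs hφTm measurableSet_Ioc fun u hu => ?_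
          have h1 : 0 ≤ φ (u + T) := hpos _ (by simp only [mem_Ioc] at hu; exact mem_Ioi.2 (by linarith))
          rw [abs_mul]
          calc |k u| * |φ (u + T)| ≤ 1 * |φ (u + T)| :=
                mul_le_mul_of_nonneg_right (hk1 u) (abs_nonneg _)
            _ = φ (u + T) := by rw [one_mul, abs_of_nonneg h1]
  -- conclude
  have h2J : 2 * J = (J - B) - A := by rw [key]; ring
  have : |2 * J| ≤ 2 * ∫ u in Ioc (0:ℝ) T, φ u := by
    rw [h2J]
    calc |(J - B) - A| ≤ |J - B| + |A| := abs_sub _ _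
      _ ≤ (∫ u in Ioi (0:ℝ), (φ u - φ (u + T))) + ∫ u in Ioc (0:ℝ) T, φ u :=
          add_le_add hdiff_le hA_le
      _ = 2 * ∫ u in Ioc (0:ℝ) T, φ u := by rw [hDval]; ring
  rw [abs_mul, abs_two] at this
  linarith

private lemma head_bound (φ : ℝ → ℝ)
    (hpos : ∀ u ∈ Ioi (0:ℝ), 0 ≤ φ u)
    (hint : IntegrableOn φ (Ioi 0))
    (β : ℝ) (hβ0 : 0 ≤ β) (hβ1 : β ≤ 1)
    (hlimsup : IsBoundedUnder (· ≤ ·) (𝓝[>] (0:ℝ)) (fun u => φ u * u ^ β)) :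
    ∃ c : ℝ, 0 ≤ c ∧ ∀ b : ℝ, 0 < b → ∫ u in Ioc (0:ℝ) b, φ u ≤ c * b ^ (1 - β) := by
  obtain ⟨C, hC⟩ := hlimsup
  rw [eventually_map] at hC
  rw [eventually_nhdsWithin_iff] at hC
  rcases Metric.eventually_nhds_iff.mp hC with ⟨δ, hδ, hδ'⟩
  set ε := δ / 2 with hεdef
  have hε : 0 < ε := by positivity
  have hCε : ∀ u ∈ Ioc (0:ℝ) ε, φ u * u ^ β ≤ C := by
    intro u hu
    rcases hu with ⟨hu1, hu2⟩
    exact hδ' (by rw [Real.dist_eq, sub_zero, abs_of_pos hu1]; linarith) hu1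
  set M := ∫ u in Ioi (0:ℝ), φ u with hMdef
  have hM : 0 ≤ M := setIntegral_nonneg measurableSet_Ioi hpos
  have hMb : ∀ b : ℝ, ∫ u in Ioc (0:ℝ) b, φ u ≤ M := by
    intro b
    refine setIntegral_mono_set hint ?_ (HasSubset.Subset.eventuallyLE Ioc_subset_Ioi_self)
    filter_upwards [ae_restrict_mem measurableSet_Ioi] with u hu using hpos u hu
  rcases eq_or_lt_of_le hβ1 with hβe | hβlt
  · -- β = 1
    refine ⟨M, hM, fun b hb => ?_⟩
    rw [← hβe, sub_self, Real.rpow_zero, mul_one]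
    exact hMb b
  · -- β < 1
    have h1β : 0 < 1 - β := by linarith
    refine ⟨max (C / (1 - β)) (M * ε ^ (β - 1)), le_max_of_le_right (by positivity), fun b hb => ?_⟩
    have hbnn : (0:ℝ) ≤ b ^ (1 - β) := Real.rpow_nonneg hb.le _
    rcases le_or_gt b ε with hbe | hbe
    · -- b ≤ ε : use the pointwise bound φ u ≤ C * u ^ (-β)
      have hptwise : ∀ u ∈ Ioc (0:ℝ) b, φ u ≤ C * u ^ (-β) := by
        intro u hu
        have hu0 : 0 < u := hu.1
        have huε : u ∈ Ioc (0:ℝ) ε := ⟨hu0, hu.2.trans hbe⟩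
        have hub : u ^ β > 0 := Real.rpow_pos_of_pos hu0 β
        have := hCε u huε
        rw [Real.rpow_neg hu0.le]
        calc φ u = φ u * u ^ β * (u ^ β)⁻¹ := by field_simp
          _ ≤ C * (u ^ β)⁻¹ := mul_le_mul_of_nonneg_right this (by positivity)
      have hrint : IntegrableOn (fun u => C * u ^ (-β)) (Ioc (0:ℝ) b) := by
        have : IntervalIntegrable (fun u : ℝ => u ^ (-β)) volume 0 b :=
          intervalIntegral.intervalIntegrable_rpow' (by linarith)
        rw [intervalIntegrable_iff_integrableOn_Ioc_of_le hb.le] at this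
        exact this.const_mul C
      have hmono : ∫ u in Ioc (0:ℝ) b, φ u ≤ ∫ u in Ioc (0:ℝ) b, C * u ^ (-β) :=
        setIntegral_mono_on (hint.mono_set Ioc_subset_Ioi_self) hrint measurableSet_Ioc hptwise
      have hcomp : ∫ u in Ioc (0:ℝ) b, C * u ^ (-β) = C / (1 - β) * b ^ (1 - β) := by
        rw [← intervalIntegral.integral_of_le hb.le]
        rw [intervalIntegral.integral_const_mul]
        rw [integral_rpow (Or.inl (by linarith : (-1:ℝ) < -β))]
        rw [Real.zero_rpow (by linarith : -β + 1 ≠ 0)]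
        have : -β + 1 = 1 - β := by ring
        rw [this]
        ring
      calc ∫ u in Ioc (0:ℝ) b, φ u ≤ C / (1 - β) * b ^ (1 - β) := hmono.trans_eq hcomp
        _ ≤ max (C / (1 - β)) (M * ε ^ (β - 1)) * b ^ (1 - β) :=
            mul_le_mul_of_nonneg_right (le_max_left _ _) hbnn
    · -- ε < b : use the trivial bound M
      have h1 : M ≤ M * ε ^ (β - 1) * b ^ (1 - β) := by
        have h2 : ε ^ (1 - β) ≤ b ^ (1 - β) :=
          Real.rpow_le_rpow hε.le hbe.le h1β.le
        have h3 : ε ^ (β - 1) * ε ^ (1 - β) = 1 := by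
          rw [← Real.rpow_add hε]; norm_num
        calc M = M * (ε ^ (β - 1) * ε ^ (1 - β)) := by rw [h3, mul_one]
          _ = M * ε ^ (β - 1) * ε ^ (1 - β) := by ring
          _ ≤ M * ε ^ (β - 1) * b ^ (1 - β) := by
              refine mul_le_mul_of_nonneg_left h2 (by positivity)
      calc ∫ u in Ioc (0:ℝ) b, φ u ≤ M := hMb b
        _ ≤ M * ε ^ (β - 1) * b ^ (1 - β) := h1
        _ ≤ max (C / (1 - β)) (M * ε ^ (β - 1)) * b ^ (1 - β) :=
            mul_le_mul_of_nonneg_right (le_max_right _ _) hbnn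

theorem smalltime_lemma51_i (φ : ℝ → ℝ)
    (hpos : ∀ u ∈ Ioi (0:ℝ), 0 ≤ φ u)
    (hint : IntegrableOn φ (Ioi 0))
    (hanti : AntitoneOn φ (Ioi 0))
    (β : ℝ) (hβ0 : 0 ≤ β) (hβ1 : β ≤ 1)
    (hlimsup : IsBoundedUnder (· ≤ ·) (𝓝[>] (0:ℝ)) (fun u => φ u * u ^ β)) :
    ∃ c : ℝ, ∀ x : ℝ, 0 < x →
      |∫ u in Ioi (0:ℝ), Real.cos (u * x) * φ u| ≤ c * x ^ (β - 1) ∧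
      |∫ u in Ioi (0:ℝ), Real.sin (u * x) * φ u| ≤ c * x ^ (β - 1) := by
  obtain ⟨c₀, hc₀, hhead⟩ := head_bound φ hpos hint β hβ0 hβ1 hlimsup
  refine ⟨c₀ * π ^ (1 - β), fun x hx => ?_⟩
  have hT : 0 < π / x := div_pos pi_pos hx
  have hrw : c₀ * (π / x) ^ (1 - β) = c₀ * π ^ (1 - β) * x ^ (β - 1) := by
    rw [Real.div_rpow pi_pos.le hx.le, div_eq_mul_inv, ← Real.rpow_neg hx.le, neg_sub,
      mul_assoc]
  have hbound : ∫ u in Ioc (0:ℝ) (π / x), φ u ≤ c₀ * π ^ (1 - β) * x ^ (β - 1) := by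
    rw [← hrw]; exact hhead _ hT
  have hper : ∀ u : ℝ, (u + π / x) * x = u * x + π := by
    intro u; field_simp
  constructor
  · refine le_trans (osc_bound φ hpos hint hanti hT (fun u => Real.cos (u * x)) ?_ ?_ ?_) hbound
    · exact (measurable_id.mul_const x).cos
    · exact fun u => Real.abs_cos_le_one _
    · intro u
      show Real.cos ((u + π / x) * x) = -Real.cos (u * x)
      rw [hper u, Real.cos_add_pi]
  · refine le_trans (osc_bound φ hpos hint hanti hT (fun u => Real.sin (u * x)) ?_ ?_ ?_) hbound
    · exact (measurable_id.mul_const x).sin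
    · exact fun u => Real.abs_sin_le_one _
    · intro u
      show Real.sin ((u + π / x) * x) = -Real.sin (u * x)
      rw [hper u, Real.sin_add_pi]
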